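/- Let Δ be an Eulerian simplicial complex of dimension 3 with n vertices. Then m_2(Δ) ≥ f_1(Δ)·(4·f_1(Δ) − n²)/(3n) − 2·(f_1(Δ) − n); equivalently, 3n·m_2(Δ) ≥ f_1(Δ)·(4·f_1(Δ) − n²) − 6n·(f_1(Δ) − n). -/

import Mathlib

/-- A finite abstract simplicial complex on vertex set `Fin n`: a collection of subsets of
`Fin n` (the faces) closed under taking subsets and containing every singleton. -/
structure AbsComplex (n : ℕ) where
  faces : Finset (Finset (Fin n))
  down_closed : ∀ F ∈ faces, ∀ G ⊆ F, G ∈ faces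
  singleton_mem : ∀ v : Fin n, ({v} : Finset (Fin n)) ∈ faces

namespace AbsComplex

variable {n : ℕ}

/-- `fNum Δ i` is the number of faces of `Δ` of cardinality `i + 1`
(i.e. of dimension `i`). -/
def fNum (Δ : AbsComplex n) (i : ℕ) : ℕ :=
  (Δ.faces.filter fun F => F.card = i + 1).card

/-- A missing face of `Δ`: a set which is not a face but all of whose proper subsets
are faces. -/
def IsMissing (Δ : AbsComplex n) (F : Finset (Fin n)) : Prop :=
  F ∉ Δ.faces ∧ ∀ G ⊂ F, G ∈ Δ.faces

/-- `mNum Δ i` is the number of missing faces of `Δ` of cardinality `i + 1`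
(i.e. of dimension `i`). -/
noncomputable def mNum (Δ : AbsComplex n) (i : ℕ) : ℕ :=
  {F : Finset (Fin n) | Δ.IsMissing F ∧ F.card = i + 1}.ncard

/-- The faces of the link of the face `F` in `Δ`: all faces `G` with `G ∩ F = ∅`
and `G ∪ F` a face. -/
def linkFaces (Δ : AbsComplex n) (F : Finset (Fin n)) : Finset (Finset (Fin n)) :=
  Δ.faces.filter fun G => G ∩ F = ∅ ∧ G ∪ F ∈ Δ.faces

/-- The reduced Euler characteristic `χ̃ = −1 + f₀ − f₁ + f₂ − ⋯` of a (downward closed,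
nonempty) collection of faces, computed as `∑_F (−1)^{|F|−1}` over all faces `F`
(including the empty face). -/
def reducedEuler (s : Finset (Finset (Fin n))) : ℤ :=
  ∑ F ∈ s, (-1 : ℤ) ^ (F.card + 1)

/-- `Δ.IsEulerianDim D` says that `Δ` is an Eulerian complex of dimension `D`: every face has
cardinality at most `D + 1`, some face has cardinality `D + 1`, and for every face `F`
(including the empty face) the reduced Euler characteristic of the link of `F` equals
`(−1)^{D − |F|}` (written as `(−1)^{D + |F|}`, which has the same parity). -/
def IsEulerianDim (Δ : AbsComplex n) (D : ℕ) : Prop :=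
  (∀ F ∈ Δ.faces, F.card ≤ D + 1) ∧ (∃ F ∈ Δ.faces, F.card = D + 1) ∧
    ∀ F ∈ Δ.faces, reducedEuler (Δ.linkFaces F) = (-1 : ℤ) ^ (D + F.card)

/-- `Δ` is `j`-neighborly: every `j`-element subset of the vertex set is a face. -/
def Neighborly (Δ : AbsComplex n) (j : ℕ) : Prop :=
  ∀ S : Finset (Fin n), S.card = j → S ∈ Δ.faces

/-- `Δ` is flag: every missing face has cardinality `2`. -/
def Flag (Δ : AbsComplex n) : Prop :=
  ∀ F : Finset (Fin n), Δ.IsMissing F → F.card = 2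

end AbsComplex

open Finset

namespace Stmt6

variable {n : ℕ}

/-- degree of a vertex in the 1-skeleton -/
def deg (Δ : AbsComplex n) (v : Fin n) : ℕ :=
  (univ.filter fun w => v ≠ w ∧ ({v, w} : Finset (Fin n)) ∈ Δ.faces).card

/-- the edge set -/
def ESet (Δ : AbsComplex n) : Finset (Finset (Fin n)) :=
  Δ.faces.filter fun F => F.card = 2

/-- triangles of the 1-skeleton -/
def Tri (Δ : AbsComplex n) : Finset (Finset (Fin n)) :=
  univ.filter fun S => S.card = 3 ∧
    ∀ u ∈ S, ∀ v ∈ S, u ≠ v → ({u, v} : Finset (Fin n)) ∈ Δ.faces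

/-- missing triangles -/
noncomputable def MSet (Δ : AbsComplex n) : Finset (Finset (Fin n)) :=
  @Finset.filter _ (fun S => Δ.IsMissing S ∧ S.card = 3) (Classical.decPred _) univ

lemma empty_mem (Δ : AbsComplex n) (hn : 0 < n) : (∅ : Finset (Fin n)) ∈ Δ.faces := by
  have v : Fin n := ⟨0, hn⟩
  exact Δ.down_closed _ (Δ.singleton_mem v) ∅ (empty_subset _)

lemma mNum2_eq (Δ : AbsComplex n) : Δ.mNum 2 = (MSet Δ).card := by
  have : {F : Finset (Fin n) | Δ.IsMissing F ∧ F.card = 3} = ↑(MSet Δ) := by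
    ext F; simp [MSet]
  rw [AbsComplex.mNum, this, Set.ncard_coe_finset]

lemma fNum0_eq (Δ : AbsComplex n) : Δ.fNum 0 = n := by
  have h : Δ.faces.filter (fun F => F.card = 1) = univ.image (fun v : Fin n => {v}) := by
    ext F
    simp only [mem_filter, mem_image, mem_univ, true_and]
    constructor
    · rintro ⟨-, hc⟩
      obtain ⟨v, rfl⟩ := card_eq_one.mp hc
      exact ⟨v, rfl⟩
    · rintro ⟨v, rfl⟩
      exact ⟨Δ.singleton_mem v, rfl⟩
  rw [AbsComplex.fNum, h, card_image_of_injective _ (fun a b h => by simpa using h)]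
  simp

end Stmt6

namespace Stmt6
variable {n : ℕ}

lemma linkFaces_empty (Δ : AbsComplex n) : Δ.linkFaces ∅ = Δ.faces := by
  unfold AbsComplex.linkFaces
  apply filter_true_of_mem
  intro F hF
  simp [hF]

/-- Euler relation at the empty face: n - f₁ + f₂ - f₃ = 0. -/
lemma euler_rel (Δ : AbsComplex n) (hn : 0 < n) (h4 : ∀ F ∈ Δ.faces, F.card ≤ 4)
    (hlink : AbsComplex.reducedEuler (Δ.linkFaces ∅) = (-1 : ℤ) ^ (3 + (∅ : Finset (Fin n)).card)) :
    (n : ℤ) - Δ.fNum 1 + Δ.fNum 2 - Δ.fNum 3 = 0 := by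
  rw [linkFaces_empty] at hlink
  have hmaps : ∀ F ∈ Δ.faces, F.card ∈ range 5 := by
    intro F hF; simpa [Nat.lt_succ_iff] using h4 F hF
  have key := Finset.sum_fiberwise_of_maps_to hmaps (fun F => (-1 : ℤ) ^ (F.card + 1))
  have inner : ∀ i : ℕ, ∑ F ∈ Δ.faces.filter (fun F => F.card = i), (-1 : ℤ) ^ (F.card + 1)
      = ((Δ.faces.filter (fun F => F.card = i)).card : ℤ) * (-1 : ℤ) ^ (i + 1) := by
    intro i
    rw [Finset.sum_congr rfl (fun F hF => by rw [(mem_filter.mp hF).2])]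
    simp [mul_comm]
  have h0 : Δ.faces.filter (fun F => F.card = 0) = {∅} := by
    ext F
    simp only [mem_filter, mem_singleton, card_eq_zero]
    exact ⟨fun h => h.2, by rintro rfl; exact ⟨empty_mem Δ hn, rfl⟩⟩
  rw [show (5 : ℕ) = 4 + 1 from rfl] at key
  rw [sum_range_succ, sum_range_succ, sum_range_succ, sum_range_succ, sum_range_succ,
    sum_range_zero] at key
  rw [inner 0, inner 1, inner 2, inner 3, inner 4, h0] at key
  have hrE : AbsComplex.reducedEuler Δ.faces = ∑ F ∈ Δ.faces, (-1 : ℤ) ^ (F.card + 1) := rfl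
  rw [hrE, ← key] at hlink
  have hf0 : (Δ.faces.filter (fun F => F.card = 1)).card = Δ.fNum 0 := rfl
  have hf1 : (Δ.faces.filter (fun F => F.card = 2)).card = Δ.fNum 1 := rfl
  have hf2 : (Δ.faces.filter (fun F => F.card = 3)).card = Δ.fNum 2 := rfl
  have hf3 : (Δ.faces.filter (fun F => F.card = 4)).card = Δ.fNum 3 := rfl
  rw [hf0, hf1, hf2, hf3, fNum0_eq] at hlink
  push_cast at hlink ⊢
  norm_num at hlink
  linarith

/-- every triangle face is in exactly two facets -/
lemma two_facets (Δ : AbsComplex n) (h4 : ∀ F ∈ Δ.faces, F.card ≤ 4)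
    (T : Finset (Fin n)) (hT : T ∈ Δ.faces) (h3 : T.card = 3)
    (hlink : AbsComplex.reducedEuler (Δ.linkFaces T) = (-1 : ℤ) ^ (3 + T.card)) :
    (univ.filter fun v => v ∉ T ∧ insert v T ∈ Δ.faces).card = 2 := by
  set V := univ.filter fun v => v ∉ T ∧ insert v T ∈ Δ.faces with hV
  have hlf : Δ.linkFaces T = insert ∅ (V.image fun v => {v}) := by
    ext G
    simp only [AbsComplex.linkFaces, mem_filter, mem_insert, mem_image, hV, mem_univ,
      true_and]
    constructor
    · rintro ⟨hG, hGT, hGU⟩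
      rcases G.eq_empty_or_nonempty with rfl | hne
      · exact Or.inl rfl
      · right
        have hdisj : Disjoint G T := disjoint_iff_inter_eq_empty.mpr hGT
        have hcu : (G ∪ T).card = G.card + T.card := card_union_of_disjoint hdisj
        have := h4 _ hGU
        have hc1 : G.card = 1 := by
          have := card_pos.mpr hne
          omega
        obtain ⟨v, rfl⟩ := card_eq_one.mp hc1
        refine ⟨v, ⟨?_, ?_⟩, rfl⟩
        · intro hv
          have : v ∈ ({v} : Finset (Fin n)) ∩ T := by simp [hv]
          rw [hGT] at this; simp at this
        · rw [show insert v T = {v} ∪ T from rfl]; exact hGU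
    · rintro (rfl | ⟨v, ⟨hvT, hins⟩, rfl⟩)
      · exact ⟨empty_mem Δ (by have := h3 ▸ card_le_univ T; simp at this; omega),
          by simp, by simpa using hT⟩
      · refine ⟨Δ.singleton_mem v, ?_, ?_⟩
        · rw [singleton_inter_of_notMem hvT]
        · rw [show ({v} : Finset (Fin n)) ∪ T = insert v T from rfl]; exact hins
  have hnotmem : (∅ : Finset (Fin n)) ∉ V.image fun v => ({v} : Finset (Fin n)) := by
    simp
  rw [hlf] at hlink
  rw [AbsComplex.reducedEuler, sum_insert hnotmem,
    sum_image (fun a _ b _ h => by simpa using h)] at hlink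
  simp only [card_empty, card_singleton, h3] at hlink
  norm_num at hlink
  omega

end Stmt6

namespace Stmt6
variable {n : ℕ}

lemma facet_count (Δ : AbsComplex n) (h4 : ∀ F ∈ Δ.faces, F.card ≤ 4)
    (htwo : ∀ T ∈ Δ.faces, T.card = 3 →
      (univ.filter fun v => v ∉ T ∧ insert v T ∈ Δ.faces).card = 2) :
    2 * Δ.fNum 2 = 4 * Δ.fNum 3 := by
  have h1 : ((Δ.faces.filter fun F => F.card = 3).sigma
      (fun T => univ.filter fun v => v ∉ T ∧ insert v T ∈ Δ.faces)).card = 2 * Δ.fNum 2 := by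
    rw [card_sigma]
    rw [Finset.sum_congr rfl (fun T hT => htwo T (mem_filter.mp hT).1 (mem_filter.mp hT).2)]
    simp [AbsComplex.fNum, mul_comm]
  have h2 : ((Δ.faces.filter fun F => F.card = 4).sigma (fun F => F)).card = 4 * Δ.fNum 3 := by
    rw [card_sigma]
    rw [Finset.sum_congr rfl (fun F hF => (mem_filter.mp hF).2)]
    simp [AbsComplex.fNum, mul_comm]
  rw [← h1, ← h2]
  apply card_nbij' (i := fun p => ⟨insert p.2 p.1, p.2⟩) (j := fun p => ⟨p.1.erase p.2, p.2⟩)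
  · rintro ⟨T, v⟩ hp
    simp only [mem_coe, mem_sigma, mem_filter, mem_univ, true_and] at hp ⊢
    obtain ⟨⟨hTf, hT3⟩, hv, hins⟩ := hp
    exact ⟨⟨hins, by rw [card_insert_of_notMem hv, hT3]⟩, mem_insert_self _ _⟩
  · rintro ⟨F, v⟩ hp
    simp only [mem_coe, mem_sigma, mem_filter, mem_univ, true_and] at hp ⊢
    obtain ⟨⟨hFf, hF4⟩, hv⟩ := hp
    refine ⟨⟨Δ.down_closed _ hFf _ (erase_subset _ _), by rw [card_erase_of_mem hv, hF4]⟩,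
      notMem_erase _ _, by rw [insert_erase hv]; exact hFf⟩
  · rintro ⟨T, v⟩ hp
    simp only [mem_coe, mem_sigma, mem_filter, mem_univ, true_and] at hp
    obtain ⟨-, hv, -⟩ := hp
    simp [Finset.erase_insert hv]
  · rintro ⟨F, v⟩ hp
    simp only [mem_coe, mem_sigma, mem_filter, mem_univ, true_and] at hp
    simp [insert_erase hp.2]

end Stmt6

namespace Stmt6
variable {n : ℕ}

lemma tri_partition (Δ : AbsComplex n) (hn : 0 < n) :
    (Tri Δ).card = Δ.fNum 2 + (MSet Δ).card := by
  have hsplit : Tri Δ = (Δ.faces.filter fun F => F.card = 3) ∪ MSet Δ := by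
    ext S
    simp only [Tri, MSet, mem_union, mem_filter, mem_univ, true_and]
    constructor
    · rintro ⟨h3, hpairs⟩
      by_cases hSf : S ∈ Δ.faces
      · exact Or.inl ⟨hSf, h3⟩
      · refine Or.inr ⟨⟨hSf, ?_⟩, h3⟩
        intro G hG
        have hGc : G.card < 3 := h3 ▸ card_lt_card hG
        interval_cases hc : G.card
        · rw [card_eq_zero.mp hc]; exact empty_mem Δ hn
        · obtain ⟨v, rfl⟩ := card_eq_one.mp hc; exact Δ.singleton_mem v
        · obtain ⟨u, v, huv, rfl⟩ := card_eq_two.mp hc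
          have hsub := hG.subset
          exact hpairs u (hsub (by simp)) v (hsub (by simp)) huv
    · rintro (⟨hSf, h3⟩ | ⟨⟨hSm, hall⟩, h3⟩)
      · refine ⟨h3, fun u hu v hv huv => ?_⟩
        exact Δ.down_closed _ hSf _ (by intro x hx; simp at hx; rcases hx with rfl | rfl
                                        exacts [hu, hv])
      · refine ⟨h3, fun u hu v hv huv => ?_⟩
        apply hall
        rw [Finset.ssubset_iff_subset_ne]
        constructor
        · intro x hx; simp at hx; rcases hx with rfl | rfl; exacts [hu, hv]
        · intro h
          have : ({u, v} : Finset (Fin n)).card = 3 := h ▸ h3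
          rw [card_pair huv] at this; omega
  have hdisj : Disjoint (Δ.faces.filter fun F => F.card = 3) (MSet Δ) := by
    rw [disjoint_left]
    intro S hS hS'
    simp only [mem_filter] at hS
    simp only [MSet, mem_filter, mem_univ, true_and] at hS'
    exact hS'.1.1 hS.1
  rw [hsplit, card_union_of_disjoint hdisj, AbsComplex.fNum]

end Stmt6

namespace Stmt6
variable {n : ℕ}

lemma pair_mem_other {G : Finset (Fin n)} (h2 : G.card = 2) {v : Fin n} (hv : v ∈ G) :
    ∃ w, v ≠ w ∧ G = {v, w} := by
  obtain ⟨a, b, hab, rfl⟩ := card_eq_two.mp h2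
  simp only [mem_insert, mem_singleton] at hv
  rcases hv with rfl | rfl
  · exact ⟨b, hab, rfl⟩
  · exact ⟨a, Ne.symm hab, by rw [pair_comm]⟩

lemma mem_ESet {Δ : AbsComplex n} {G : Finset (Fin n)} :
    G ∈ ESet Δ ↔ G ∈ Δ.faces ∧ G.card = 2 := mem_filter

lemma sum_deg (Δ : AbsComplex n) : ∑ v, deg Δ v = 2 * (ESet Δ).card := by
  have h1 : ∑ v, deg Δ v =
      (univ.sigma fun v => univ.filter fun w => v ≠ w ∧ ({v, w} : Finset (Fin n)) ∈ Δ.faces).card := by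
    rw [card_sigma]; simp [deg]
  have h2 : 2 * (ESet Δ).card = ((ESet Δ).sigma fun G => G).card := by
    rw [card_sigma]
    rw [Finset.sum_congr rfl (fun G hG => (mem_ESet.mp hG).2)]
    simp [mul_comm]
  rw [h1, h2]
  apply card_bij (i := fun p _ => (⟨{p.1, p.2}, p.1⟩ : Σ _ : Finset (Fin n), Fin n))
  · rintro ⟨v, w⟩ hp
    simp only [mem_sigma, mem_filter, mem_univ, true_and] at hp
    simp only [mem_sigma, mem_ESet]
    exact ⟨⟨hp.2, card_pair hp.1⟩, by simp⟩
  · rintro ⟨v, w⟩ h1 ⟨v', w'⟩ h2 heq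
    simp only [mem_sigma, mem_filter, mem_univ, true_and] at h1 h2
    have hset : ({v, w} : Finset (Fin n)) = {v', w'} := congrArg Sigma.fst heq
    have hv : v = v' := congrArg Sigma.snd heq
    subst hv
    have : w ∈ ({v, w'} : Finset (Fin n)) := hset ▸ (by simp)
    simp only [mem_insert, mem_singleton] at this
    rcases this with rfl | rfl
    · exact absurd rfl h1.1
    · rfl
  · rintro ⟨G, v⟩ hp
    simp only [mem_sigma, mem_ESet] at hp
    obtain ⟨⟨hGf, hG2⟩, hv⟩ := hp
    obtain ⟨w, hvw, rfl⟩ := pair_mem_other hG2 hv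
    refine ⟨⟨v, w⟩, ?_, rfl⟩
    simp only [mem_sigma, mem_filter, mem_univ, true_and]
    exact ⟨hvw, hGf⟩

lemma deg_fiber (Δ : AbsComplex n) (x : Fin n) :
    deg Δ x = ((ESet Δ).filter fun G => x ∈ G).card := by
  apply card_bij (i := fun w _ => ({x, w} : Finset (Fin n)))
  · intro w hw
    simp only [mem_filter, mem_univ, true_and] at hw
    simp only [mem_filter, mem_ESet]
    exact ⟨⟨hw.2, card_pair hw.1⟩, by simp⟩
  · intro w₁ h₁ w₂ h₂ heq
    simp only [mem_filter, mem_univ, true_and] at h₁ h₂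
    have : w₁ ∈ ({x, w₂} : Finset (Fin n)) := heq ▸ (by simp)
    simp only [mem_insert, mem_singleton] at this
    rcases this with rfl | rfl
    · exact absurd rfl h₁.1
    · rfl
  · intro G hG
    simp only [mem_filter, mem_ESet] at hG
    obtain ⟨⟨hGf, hG2⟩, hx⟩ := hG
    obtain ⟨w, hxw, rfl⟩ := pair_mem_other hG2 hx
    exact ⟨w, by simp only [mem_filter, mem_univ, true_and]; exact ⟨hxw, hGf⟩, rfl⟩

lemma sum_edge_deg (Δ : AbsComplex n) :
    ∑ G ∈ ESet Δ, ∑ x ∈ G, (deg Δ x : ℤ) = ∑ v, (deg Δ v : ℤ) ^ 2 := by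
  have huniv : ∀ G : Finset (Fin n), ∑ x ∈ G, (deg Δ x : ℤ)
      = ∑ x : Fin n, if x ∈ G then (deg Δ x : ℤ) else 0 := by
    intro G
    rw [← Finset.sum_filter]
    congr 1
    ext x; simp
  calc ∑ G ∈ ESet Δ, ∑ x ∈ G, (deg Δ x : ℤ)
      = ∑ G ∈ ESet Δ, ∑ x : Fin n, (if x ∈ G then (deg Δ x : ℤ) else 0) := by
        exact Finset.sum_congr rfl fun G _ => huniv G
    _ = ∑ x : Fin n, ∑ G ∈ ESet Δ, (if x ∈ G then (deg Δ x : ℤ) else 0) := Finset.sum_comm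
    _ = ∑ x : Fin n, (deg Δ x : ℤ) * ((ESet Δ).filter fun G => x ∈ G).card := by
        refine Finset.sum_congr rfl fun x _ => ?_
        rw [← Finset.sum_filter, Finset.sum_const, nsmul_eq_mul, mul_comm]
    _ = ∑ v, (deg Δ v : ℤ) ^ 2 := by
        refine Finset.sum_congr rfl fun x _ => ?_
        rw [← deg_fiber, sq]

end Stmt6

namespace Stmt6
variable {n : ℕ}

lemma mem_Tri {Δ : AbsComplex n} {S : Finset (Fin n)} :
    S ∈ Tri Δ ↔ S.card = 3 ∧ ∀ u ∈ S, ∀ v ∈ S, u ≠ v → ({u, v} : Finset (Fin n)) ∈ Δ.faces := by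
  simp [Tri]

lemma edge_bound (Δ : AbsComplex n) {u v : Fin n} (huv : u ≠ v)
    (hE : ({u, v} : Finset (Fin n)) ∈ ESet Δ) :
    (deg Δ u : ℤ) + deg Δ v - n ≤
      ((univ.filter fun w => w ∉ ({u, v} : Finset (Fin n)) ∧
        insert w ({u, v} : Finset (Fin n)) ∈ Tri Δ).card : ℤ) := by
  set Nu := univ.filter fun w => u ≠ w ∧ ({u, w} : Finset (Fin n)) ∈ Δ.faces with hNu
  set Nv := univ.filter fun w => v ≠ w ∧ ({v, w} : Finset (Fin n)) ∈ Δ.faces with hNv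
  have hsub : Nu ∩ Nv ⊆ univ.filter fun w => w ∉ ({u, v} : Finset (Fin n)) ∧
      insert w ({u, v} : Finset (Fin n)) ∈ Tri Δ := by
    intro w hw
    simp only [mem_inter, hNu, hNv, mem_filter, mem_univ, true_and] at hw
    obtain ⟨⟨huw, hfuw⟩, hvw, hfvw⟩ := hw
    have hwuv : w ∉ ({u, v} : Finset (Fin n)) := by
      simp only [mem_insert, mem_singleton]
      push_neg
      exact ⟨fun h => huw h.symm, fun h => hvw h.symm⟩
    simp only [mem_filter, mem_univ, true_and]
    refine ⟨hwuv, mem_Tri.mpr ⟨?_, ?_⟩⟩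
    · rw [card_insert_of_notMem hwuv, card_pair huv]
    · intro a ha b hb hab
      have hfuv : ({u, v} : Finset (Fin n)) ∈ Δ.faces := (mem_ESet.mp hE).1
      have hfwu : ({w, u} : Finset (Fin n)) ∈ Δ.faces := by rw [pair_comm]; exact hfuw
      have hfwv : ({w, v} : Finset (Fin n)) ∈ Δ.faces := by rw [pair_comm]; exact hfvw
      have hfvu : ({v, u} : Finset (Fin n)) ∈ Δ.faces := by rw [pair_comm]; exact hfuv
      simp only [mem_insert, mem_singleton] at ha hb
      rcases ha with rfl | rfl | rfl <;> rcases hb with rfl | rfl | rfl <;>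
        first
          | exact absurd rfl hab
          | assumption
  have h1 : (Nu ∩ Nv).card + (Nu ∪ Nv).card = Nu.card + Nv.card :=
    card_inter_add_card_union Nu Nv
  have h2 : (Nu ∪ Nv).card ≤ n := by
    have := card_le_univ (Nu ∪ Nv)
    simpa using this
  have h3 := card_le_card hsub
  have hdu : Nu.card = deg Δ u := rfl
  have hdv : Nv.card = deg Δ v := rfl
  push_cast
  rw [← hdu, ← hdv]
  push_cast at h3 ⊢
  have := (Nat.cast_le (α := ℤ)).mpr h3
  have h1' := congrArg (Nat.cast (R := ℤ)) h1
  push_cast at h1' this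
  have h2' := (Nat.cast_le (α := ℤ)).mpr h2
  push_cast at h2'
  linarith

lemma triple_count (Δ : AbsComplex n) :
    ∑ G ∈ ESet Δ, ((univ.filter fun w => w ∉ G ∧ insert w G ∈ Tri Δ).card) =
      3 * (Tri Δ).card := by
  have h1 : ∑ G ∈ ESet Δ, ((univ.filter fun w => w ∉ G ∧ insert w G ∈ Tri Δ).card) =
      ((ESet Δ).sigma fun G => univ.filter fun w => w ∉ G ∧ insert w G ∈ Tri Δ).card := by
    rw [card_sigma]
  have h2 : 3 * (Tri Δ).card = ((Tri Δ).sigma fun S => S).card := by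
    rw [card_sigma]
    rw [Finset.sum_congr rfl (fun S hS => (mem_Tri.mp hS).1)]
    simp [mul_comm]
  rw [h1, h2]
  apply card_nbij' (i := fun p => ⟨insert p.2 p.1, p.2⟩) (j := fun p => ⟨p.1.erase p.2, p.2⟩)
  · rintro ⟨G, w⟩ hp
    simp only [mem_coe, mem_sigma, mem_filter, mem_univ, true_and] at hp ⊢
    exact ⟨hp.2.2, mem_insert_self _ _⟩
  · rintro ⟨S, w⟩ hp
    simp only [mem_coe, mem_sigma] at hp
    obtain ⟨hS, hw⟩ := hp
    obtain ⟨h3, hpairs⟩ := mem_Tri.mp hS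
    simp only [mem_coe, mem_sigma, mem_filter, mem_univ, true_and]
    have hc2 : (S.erase w).card = 2 := by rw [card_erase_of_mem hw, h3]
    have hface : S.erase w ∈ Δ.faces := by
      obtain ⟨a, b, hab, hab2⟩ := card_eq_two.mp hc2
      have ha : a ∈ S.erase w := hab2 ▸ (by simp)
      have hb : b ∈ S.erase w := hab2 ▸ (by simp)
      rw [hab2]
      exact hpairs a (mem_of_mem_erase ha) b (mem_of_mem_erase hb) hab
    exact ⟨mem_ESet.mpr ⟨hface, hc2⟩, notMem_erase _ _, by rwa [insert_erase hw]⟩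
  · rintro ⟨G, w⟩ hp
    simp only [mem_coe, mem_sigma, mem_filter, mem_univ, true_and] at hp
    simp [Finset.erase_insert hp.2.1]
  · rintro ⟨S, w⟩ hp
    simp only [mem_coe, mem_sigma] at hp
    simp [insert_erase hp.2]

end Stmt6

open Stmt6 in
theorem statement6 {n : ℕ} (Δ : AbsComplex n) (hEul : Δ.IsEulerianDim 3) :
    3 * (n : ℤ) * (Δ.mNum 2 : ℤ) ≥
      (Δ.fNum 1 : ℤ) * (4 * (Δ.fNum 1 : ℤ) - (n : ℤ) ^ 2) -
        6 * (n : ℤ) * ((Δ.fNum 1 : ℤ) - (n : ℤ)) := by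
  obtain ⟨h4, ⟨F4, hF4f, hF4c⟩, hlinks⟩ := hEul
  have hn : 0 < n := by
    have h := card_le_univ F4
    rw [hF4c] at h
    simpa using lt_of_lt_of_le (by norm_num : 0 < 4) (by simpa using h)
  -- Euler relation and two-facet property
  have hA := euler_rel Δ hn h4 (hlinks ∅ (empty_mem Δ hn))
  have hC := facet_count Δ h4
    (fun T hT h3 => two_facets Δ h4 T hT h3 (hlinks T hT))
  have hf2 : (Δ.fNum 2 : ℤ) = 2 * (Δ.fNum 1 : ℤ) - 2 * n := by
    have hC' : (2 : ℤ) * Δ.fNum 2 = 4 * Δ.fNum 3 := by exact_mod_cast hC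
    linarith
  -- edge count abbreviation
  set e : ℤ := (Δ.fNum 1 : ℤ) with he
  have hEcard : ((ESet Δ).card : ℤ) = e := rfl
  -- per-edge bound summed
  have hper : ∀ G ∈ ESet Δ, (∑ x ∈ G, (deg Δ x : ℤ)) - n ≤
      ((univ.filter fun w => w ∉ G ∧ insert w G ∈ Tri Δ).card : ℤ) := by
    intro G hG
    obtain ⟨hGf, hG2⟩ := mem_ESet.mp hG
    obtain ⟨u, v, huv, rfl⟩ := card_eq_two.mp hG2
    rw [Finset.sum_pair huv]
    exact edge_bound Δ huv hG
  have hsum := Finset.sum_le_sum hper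
  have hLHS : ∑ G ∈ ESet Δ, ((∑ x ∈ G, (deg Δ x : ℤ)) - n) =
      (∑ v, (deg Δ v : ℤ) ^ 2) - n * e := by
    rw [Finset.sum_sub_distrib, sum_edge_deg, Finset.sum_const, nsmul_eq_mul, hEcard, mul_comm]
  have hRHS : ∑ G ∈ ESet Δ, (((univ.filter fun w => w ∉ G ∧ insert w G ∈ Tri Δ).card : ℕ) : ℤ)
      = 3 * ((Tri Δ).card : ℤ) := by
    rw [← Nat.cast_sum]
    exact_mod_cast congrArg (Nat.cast (R := ℤ)) (triple_count Δ)
  rw [hLHS, hRHS] at hsum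
  -- Cauchy–Schwarz
  have hCS : (∑ v, (deg Δ v : ℤ)) ^ 2 ≤ (n : ℤ) * ∑ v, (deg Δ v : ℤ) ^ 2 := by
    have := sq_sum_le_card_mul_sum_sq (s := (univ : Finset (Fin n)))
      (f := fun v => (deg Δ v : ℤ))
    simpa using this
  have hdegsum : (∑ v, (deg Δ v : ℤ)) = 2 * e := by
    have := congrArg (Nat.cast (R := ℤ)) (sum_deg Δ)
    push_cast at this
    rw [this, hEcard]
  rw [hdegsum] at hCS
  -- multiply by n
  have hmul : (n : ℤ) * ((∑ v, (deg Δ v : ℤ) ^ 2) - n * e) ≤ (n : ℤ) * (3 * ((Tri Δ).card : ℤ)) :=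
    mul_le_mul_of_nonneg_left hsum (by positivity)
  -- triangle partition
  have hT : ((Tri Δ).card : ℤ) = (Δ.fNum 2 : ℤ) + (Δ.mNum 2 : ℤ) := by
    rw [mNum2_eq]
    exact_mod_cast congrArg (Nat.cast (R := ℤ)) (tri_partition Δ hn)
  rw [hT] at hmul
  nlinarith [hmul, hCS, hf2]
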